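/- A countable infinite group G is residually finite if and only if there exists a free G-odometer, i.e., a decreasing sequence (Γₙ)ₙ of finite index subgroups such that the translation action of G on lim← G/Γₙ is free. -/
import Mathlib


def odometerSet {G : Type*} [Group G] (Γ : ℕ → Subgroup G) : Set (Π n, G ⧸ Γ n) :=
  {z | ∀ (n : ℕ) (g : G), z (n + 1) = (g : G ⧸ Γ (n + 1)) → z n = (g : G ⧸ Γ n)}

/-- a countable infinite group is residually finite iff there exists a free
G-odometer, i.e. a decreasing sequence of finite index subgroups such that the
translation action on the inverse limit is free. -/
theorem stmt_6 {G : Type*} [Group G] [Countable G] [Infinite G] :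
    (∀ g : G, g ≠ 1 → ∃ N : Subgroup G, N.Normal ∧ N.FiniteIndex ∧ g ∉ N) ↔
    ∃ Γ : ℕ → Subgroup G, (∀ n, (Γ n).FiniteIndex) ∧ (∀ n, Γ (n + 1) ≤ Γ n) ∧
      ∀ z ∈ odometerSet Γ, ∀ h : G, h • z = z → h = 1 := by
  constructor
  · intro hres
    obtain ⟨e, he⟩ := exists_surjective_nat G
    -- choose for each g a normal finite index subgroup avoiding g (⊤ if g = 1)
    have hN : ∀ g : G, ∃ N : Subgroup G, N.Normal ∧ N.FiniteIndex ∧ (g ≠ 1 → g ∉ N) := by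
      intro g
      by_cases hg : g = 1
      · exact ⟨⊤, inferInstance, ⟨by rw [Subgroup.index_top]; exact one_ne_zero⟩, fun h => absurd hg h⟩
      · obtain ⟨N, hn, hf, hgN⟩ := hres g hg
        exact ⟨N, hn, hf, fun _ => hgN⟩
    choose N hNnormal hNfin hNavoid using hN
    refine ⟨fun n => ⨅ k ∈ Finset.range (n + 1), N (e k), ?_, ?_, ?_⟩
    · intro n
      exact Subgroup.finiteIndex_iInf' _ fun i _ => hNfin (e i)
    · intro n
      exact biInf_mono fun k hk => Finset.mem_range.mpr
        (lt_trans (Finset.mem_range.mp hk) (Nat.lt_succ_self _))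
    · intro z _ h hz
      by_contra hne
      obtain ⟨k, hk⟩ := he h
      -- h ∈ Γ k since the action fixes z k and Γ k is normal
      have hzk : h • z k = z k := congrFun hz k
      obtain ⟨x, hx⟩ := QuotientGroup.mk_surjective (z k)
      rw [← hx] at hzk
      have hmem : x⁻¹ * h⁻¹ * x ∈ ⨅ j ∈ Finset.range (k + 1), N (e j) := by
        rw [MulAction.Quotient.smul_mk] at hzk
        have := (QuotientGroup.eq).mp hzk
        simpa [mul_assoc, mul_inv_rev] using this
      have hk' : x⁻¹ * h⁻¹ * x ∈ N (e k) := by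
        have := Subgroup.mem_iInf.mp hmem k
        have := Subgroup.mem_iInf.mp this (Finset.mem_range.mpr (Nat.lt_succ_self k))
        exact this
      have hinv : h⁻¹ ∈ N (e k) := by
        have := (hNnormal (e k)).conj_mem _ hk' x
        simpa [mul_assoc] using this
      have : h ∈ N (e k) := by simpa using (N (e k)).inv_mem hinv
      rw [hk] at *
      exact hNavoid h hne this
  · rintro ⟨Γ, hfin, hdec, hfree⟩ g hg
    -- the constant identity sequence lies in the odometer
    have hz : (fun n => ((1 : G) : G ⧸ Γ n)) ∈ odometerSet Γ := by
      intro n x hx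
      have : x ∈ Γ (n + 1) := by
        have := (QuotientGroup.eq).mp hx.symm
        simpa using this
      have : x ∈ Γ n := hdec n this
      exact ((QuotientGroup.eq).mpr (by simpa using this)).symm
    -- g does not fix it, so g ∉ Γ n for some n
    have : ¬ g • (fun n => ((1 : G) : G ⧸ Γ n)) = (fun n => ((1 : G) : G ⧸ Γ n)) := by
      intro h
      exact hg (hfree _ hz g h)
    have : ∃ n, g ∉ Γ n := by
      by_contra hall
      push_neg at hall
      apply this
      funext n
      show ((g * 1 : G) : G ⧸ Γ n) = ((1 : G) : G ⧸ Γ n)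
      exact (QuotientGroup.eq).mpr (by simpa using (Γ n).inv_mem (hall n))
    obtain ⟨n, hn⟩ := this
    haveI := hfin n
    exact ⟨(Γ n).normalCore, inferInstance, inferInstance,
      fun hmem => hn ((Γ n).normalCore_le hmem)⟩
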